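/- arXiv:1812.03081 — 2 statements merged into one kernel-verified Lean document; each statement's English description precedes it below -/
import Mathlib

section
/- Let d : YoungDiagram → ℕ count standard Young tableaux. Then for every Young diagram λ the set {Λ : YoungDiagram | λ ⋖ Λ} is finite and ∑ over Λ with λ ⋖ Λ of d Λ equals (λ.card + 1) * d λ. -/
/-- `CoversBelow μ lam` (written `μ ⋖ lam` informally): `μ ≤ lam` and
`μ.card + 1 = lam.card`. -/
def CoversBelow (μ lam : YoungDiagram) : Prop :=
  μ ≤ lam ∧ μ.card + 1 = lam.card

/-- `d : YoungDiagram → ℕ` counts standard Young tableaux: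
`d ⊥ = 1` and, for every `lam ≠ ⊥`, `d lam` is the sum of `d μ` over the
(finite) set of diagrams `μ` covered by `lam`. -/
def CountsSYT (d : YoungDiagram → ℕ) : Prop :=
  d ⊥ = 1 ∧ ∀ lam : YoungDiagram, lam ≠ ⊥ →
    d lam = ∑ᶠ μ ∈ {μ : YoungDiagram | CoversBelow μ lam}, d μ

namespace SYTAux

open YoungDiagram Finset

noncomputable instance : DecidableEq YoungDiagram := Classical.decEq _

lemma yd_cells_inj : Function.Injective (YoungDiagram.cells) := by
  intro μ ν h; ext x; constructor <;> intro hx <;>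
    [rw [← h]; rw [h]] <;> exact hx

lemma eq_of_le_of_card_le {μ ν : YoungDiagram} (h : μ ≤ ν) (hc : ν.card ≤ μ.card) : μ = ν := by
  apply yd_cells_inj
  exact Finset.eq_of_subset_of_card_le (YoungDiagram.cells_subset_iff.mpr h) hc

lemma card_le_of_le {μ ν : YoungDiagram} (h : μ ≤ ν) : μ.card ≤ ν.card :=
  Finset.card_le_card (YoungDiagram.cells_subset_iff.mpr h)

lemma card_eq_zero_iff {μ : YoungDiagram} : μ.card = 0 ↔ μ = ⊥ := by
  constructor
  · intro h
    apply yd_cells_inj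
    rw [YoungDiagram.cells_bot]
    exact Finset.card_eq_zero.mp h
  · intro h; subst h; simp [YoungDiagram.card, YoungDiagram.cells_bot]

/-- A cover adds exactly one cell. -/
lemma exists_insert_cell {μ lam : YoungDiagram} (h : CoversBelow μ lam) :
    ∃ c, c ∉ μ ∧ lam.cells = insert c μ.cells := by
  obtain ⟨hle, hcard⟩ := h
  have hsub : μ.cells ⊆ lam.cells := YoungDiagram.cells_subset_iff.mpr hle
  have hcard' : μ.cells.card + 1 = lam.cells.card := hcard
  have hdc : (lam.cells \ μ.cells).card = 1 := by
    rw [Finset.card_sdiff_of_subset hsub]; omega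
  obtain ⟨c, hc⟩ := Finset.card_eq_one.mp hdc
  have hcmem : c ∈ lam.cells \ μ.cells := by rw [hc]; simp
  refine ⟨c, ?_, ?_⟩
  · have := (Finset.mem_sdiff.mp hcmem).2
    simpa [YoungDiagram.mem_cells] using this
  · apply Finset.Subset.antisymm
    · intro x hx
      by_cases hxμ : x ∈ μ.cells
      · exact Finset.mem_insert_of_mem hxμ
      · have : x ∈ lam.cells \ μ.cells := Finset.mem_sdiff.mpr ⟨hx, hxμ⟩
        rw [hc] at this
        simp at this
        simp [this]
    · intro x hx
      rcases Finset.mem_insert.mp hx with rfl | hx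
      · exact (Finset.mem_sdiff.mp hcmem).1
      · exact hsub hx

/-- The cell added by an upper cover is `(i, rowLen i)` for an addable row `i`. -/
lemma cover_above_cell {lam Lam : YoungDiagram} (h : CoversBelow lam Lam) :
    ∃ i, i < lam.colLen 0 + 1 ∧ (i = 0 ∨ lam.rowLen i < lam.rowLen (i - 1)) ∧
      Lam.cells = insert (i, lam.rowLen i) lam.cells := by
  obtain ⟨⟨i, j⟩, hc_not, hc_eq⟩ := exists_insert_cell h
  have hcLam : (i, j) ∈ Lam := by
    rw [← YoungDiagram.mem_cells, hc_eq]; simp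
  have hjge : lam.rowLen i ≤ j := by
    by_contra hlt
    exact hc_not (YoungDiagram.mem_iff_lt_rowLen.mpr (by omega))
  have hmem_lam : ∀ x : ℕ × ℕ, x ∈ Lam → x ≠ (i, j) → x ∈ lam := by
    intro x hx hne
    have : x ∈ Lam.cells := hx
    rw [hc_eq] at this
    rcases Finset.mem_insert.mp this with h1 | h1
    · exact absurd h1 hne
    · exact h1
  have hjle : j ≤ lam.rowLen i := by
    by_contra hlt
    push_neg at hlt
    have h1 : (i, lam.rowLen i) ∈ Lam :=
      Lam.up_left_mem le_rfl (le_of_lt hlt) hcLam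
    have h2 : (i, lam.rowLen i) ∈ lam := by
      apply hmem_lam _ h1
      simp only [ne_eq, Prod.mk.injEq]
      omega
    exact absurd (YoungDiagram.mem_iff_lt_rowLen.mp h2) (lt_irrefl _)
  have hj : j = lam.rowLen i := le_antisymm hjle hjge
  subst hj
  refine ⟨i, ?_, ?_, hc_eq⟩
  · rcases Nat.eq_zero_or_pos i with rfl | hi
    · omega
    · have h1 : (i - 1, 0) ∈ Lam := Lam.up_left_mem (by omega) (Nat.zero_le _) hcLam
      have h2 : (i - 1, 0) ∈ lam := by
        apply hmem_lam _ h1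
        simp only [ne_eq, Prod.mk.injEq]
        omega
      have := YoungDiagram.mem_iff_lt_colLen.mp h2
      omega
  · rcases Nat.eq_zero_or_pos i with rfl | hi
    · left; rfl
    · right
      have h1 : (i - 1, lam.rowLen i) ∈ Lam :=
        Lam.up_left_mem (by omega) le_rfl hcLam
      have h2 : (i - 1, lam.rowLen i) ∈ lam := by
        apply hmem_lam _ h1
        simp only [ne_eq, Prod.mk.injEq]
        omega
      exact YoungDiagram.mem_iff_lt_rowLen.mp h2

/-- The cell removed by a lower cover is `(i, rowLen i - 1)` for a removable row `i`. -/
lemma cover_below_cell {μ lam : YoungDiagram} (h : CoversBelow μ lam) :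
    ∃ i, i < lam.colLen 0 + 1 ∧ lam.rowLen (i + 1) < lam.rowLen i ∧
      μ.cells = lam.cells.erase (i, lam.rowLen i - 1) := by
  obtain ⟨⟨i, j⟩, hc_not, hc_eq⟩ := exists_insert_cell h
  have hcμ : (i, j) ∉ μ.cells := by simpa [YoungDiagram.mem_cells] using hc_not
  have hμ_eq : μ.cells = lam.cells.erase (i, j) := by
    rw [hc_eq, Finset.erase_insert hcμ]
  have hclam : (i, j) ∈ lam := by rw [← YoungDiagram.mem_cells, hc_eq]; simp
  have hjlt : j < lam.rowLen i := YoungDiagram.mem_iff_lt_rowLen.mp hclam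
  have key : ∀ x : ℕ × ℕ, x ∈ lam → (i, j) ≤ x → x = (i, j) := by
    rintro ⟨a, b⟩ hx hle
    by_contra hne
    have hxμ : (a, b) ∈ μ := by
      rw [← YoungDiagram.mem_cells, hμ_eq]
      exact Finset.mem_erase.mpr ⟨hne, hx⟩
    exact hc_not (μ.up_left_mem hle.1 hle.2 hxμ)
  have hj1 : lam.rowLen i ≤ j + 1 := by
    by_contra hlt
    push_neg at hlt
    have h1 : (i, j + 1) ∈ lam := YoungDiagram.mem_iff_lt_rowLen.mpr hlt
    have := key (i, j + 1) h1 ⟨le_rfl, by omega⟩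
    simp at this
  have hjr : j = lam.rowLen i - 1 := by omega
  have hrem : lam.rowLen (i + 1) ≤ j := by
    by_contra hlt
    push_neg at hlt
    have h1 : (i + 1, j) ∈ lam := YoungDiagram.mem_iff_lt_rowLen.mpr hlt
    have := key (i + 1, j) h1 ⟨by omega, le_rfl⟩
    simp at this
  have hicol : i < lam.colLen 0 :=
    YoungDiagram.mem_iff_lt_colLen.mp (lam.up_left_mem le_rfl (Nat.zero_le _) hclam)
  exact ⟨i, by omega, by omega, by rw [hμ_eq, hjr]⟩

/-- Adding cell `(i, rowLen i)` at an addable row gives a Young diagram. -/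
def addCell (lam : YoungDiagram) (i : ℕ)
    (h : i = 0 ∨ lam.rowLen i < lam.rowLen (i - 1)) : YoungDiagram where
  cells := insert (i, lam.rowLen i) lam.cells
  isLowerSet := by
    rintro ⟨a, b⟩ ⟨x, y⟩ ⟨hxa, hyb⟩ hab
    simp only [Finset.coe_insert, Set.mem_insert_iff, Finset.mem_coe,
      ← YoungDiagram.mem_cells] at *
    -- hxa : x ≤ a, hyb : y ≤ b, hab : (a,b) ∈ insert c lam, goal : (x,y) ∈ insert c lam
    rcases hab with hab | hab
    · rw [Prod.mk.injEq] at hab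
      obtain ⟨rfl, rfl⟩ := hab
      by_cases hxy : x = a ∧ y = lam.rowLen a
      · left; rw [Prod.mk.injEq]; exact hxy
      · right
        rcases Nat.lt_or_ge x a with hlt | hge
        · have ha0 : a ≠ 0 := by omega
          have hlt2 : lam.rowLen a < lam.rowLen (a - 1) := h.resolve_left ha0
          have h1 : lam.rowLen (a - 1) ≤ lam.rowLen x :=
            lam.rowLen_anti x (a - 1) (by omega)
          exact YoungDiagram.mem_iff_lt_rowLen.mpr (by omega)
        · have hae : x = a := by omega
          subst hae
          have : y < lam.rowLen x := by
            rcases Nat.lt_or_ge y (lam.rowLen x) with h1 | h1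
            · exact h1
            · exfalso; exact hxy ⟨rfl, by omega⟩
          exact YoungDiagram.mem_iff_lt_rowLen.mpr this
    · right
      exact lam.up_left_mem hxa hyb hab

lemma addCell_covers (lam : YoungDiagram) (i : ℕ)
    (h : i = 0 ∨ lam.rowLen i < lam.rowLen (i - 1)) :
    CoversBelow lam (addCell lam i h) := by
  constructor
  · rw [← YoungDiagram.cells_subset_iff]
    exact Finset.subset_insert _ _
  · show lam.card + 1 = (insert (i, lam.rowLen i) lam.cells).card
    rw [Finset.card_insert_of_notMem]
    · simp [YoungDiagram.mem_cells, YoungDiagram.mem_iff_lt_rowLen]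

/-- Removing cell `(i, rowLen i - 1)` at a removable row gives a Young diagram. -/
def removeCell (lam : YoungDiagram) (i : ℕ)
    (h : lam.rowLen (i + 1) < lam.rowLen i) : YoungDiagram where
  cells := lam.cells.erase (i, lam.rowLen i - 1)
  isLowerSet := by
    rintro ⟨a, b⟩ ⟨x, y⟩ ⟨hxa, hyb⟩ hab
    simp only [Finset.coe_erase, Set.mem_diff, Finset.mem_coe, Set.mem_singleton_iff,
      ← YoungDiagram.mem_cells] at *
    obtain ⟨hab, habne⟩ := hab
    refine ⟨lam.up_left_mem hxa hyb hab, ?_⟩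
    intro hc
    rw [Prod.mk.injEq] at hc
    obtain ⟨rfl, rfl⟩ := hc
    -- (x, y) = (i, rowLen i - 1) ≤ (a, b), (a, b) ∈ lam, (a, b) ≠ (i, rowLen i - 1)
    have hblt : b < lam.rowLen a := YoungDiagram.mem_iff_lt_rowLen.mp hab
    rw [Prod.mk.injEq] at habne
    rcases Nat.lt_or_ge a (x + 1) with ha1 | ha1
    · have hae : a = x := by omega
      subst hae
      exact habne ⟨rfl, by omega⟩
    · have h1 : lam.rowLen a ≤ lam.rowLen (x + 1) := lam.rowLen_anti _ _ ha1
      omega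

lemma removeCell_covers (lam : YoungDiagram) (i : ℕ)
    (h : lam.rowLen (i + 1) < lam.rowLen i) :
    CoversBelow (removeCell lam i h) lam := by
  have hmem : (i, lam.rowLen i - 1) ∈ lam.cells := by
    rw [YoungDiagram.mem_cells]
    exact YoungDiagram.mem_iff_lt_rowLen.mpr (by omega)
  constructor
  · rw [← YoungDiagram.cells_subset_iff]
    exact Finset.erase_subset _ _
  · show (lam.cells.erase _).card + 1 = lam.card
    rw [Finset.card_erase_of_mem hmem]
    have : 1 ≤ lam.cells.card := Finset.card_pos.mpr ⟨_, hmem⟩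
    show lam.cells.card - 1 + 1 = lam.cells.card
    omega

/-- Addable row indices. -/
def AddF (lam : YoungDiagram) : Finset ℕ :=
  (Finset.range (lam.colLen 0 + 1)).filter
    (fun i => i = 0 ∨ lam.rowLen i < lam.rowLen (i - 1))

/-- Removable row indices. -/
def RemF (lam : YoungDiagram) : Finset ℕ :=
  (Finset.range (lam.colLen 0 + 1)).filter
    (fun i => lam.rowLen (i + 1) < lam.rowLen i)

/-- Total version of `addCell`. -/
noncomputable def addCell' (lam : YoungDiagram) (i : ℕ) : YoungDiagram :=
  if h : i = 0 ∨ lam.rowLen i < lam.rowLen (i - 1) then addCell lam i h else ⊥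

/-- Total version of `removeCell`. -/
noncomputable def removeCell' (lam : YoungDiagram) (i : ℕ) : YoungDiagram :=
  if h : lam.rowLen (i + 1) < lam.rowLen i then removeCell lam i h else ⊥

lemma coversAbove_eq (lam : YoungDiagram) :
    {Lam : YoungDiagram | CoversBelow lam Lam} = ↑((AddF lam).image (addCell' lam)) := by
  ext Lam
  simp only [Set.mem_setOf_eq, Finset.coe_image, Set.mem_image, Finset.mem_coe, AddF,
    Finset.mem_filter, Finset.mem_range]
  constructor
  · intro h
    obtain ⟨i, hi1, hi2, hi3⟩ := cover_above_cell h
    refine ⟨i, ⟨hi1, hi2⟩, ?_⟩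
    apply yd_cells_inj
    rw [addCell', dif_pos hi2]
    exact hi3.symm
  · rintro ⟨i, ⟨hi1, hi2⟩, rfl⟩
    rw [addCell', dif_pos hi2]
    exact addCell_covers lam i hi2

lemma coversBelow_eq (lam : YoungDiagram) :
    {μ : YoungDiagram | CoversBelow μ lam} = ↑((RemF lam).image (removeCell' lam)) := by
  ext μ
  simp only [Set.mem_setOf_eq, Finset.coe_image, Set.mem_image, Finset.mem_coe, RemF,
    Finset.mem_filter, Finset.mem_range]
  constructor
  · intro h
    obtain ⟨i, hi1, hi2, hi3⟩ := cover_below_cell h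
    refine ⟨i, ⟨hi1, hi2⟩, ?_⟩
    apply yd_cells_inj
    rw [removeCell', dif_pos hi2]
    exact hi3.symm
  · rintro ⟨i, ⟨hi1, hi2⟩, rfl⟩
    rw [removeCell', dif_pos hi2]
    exact removeCell_covers lam i hi2

lemma coversAbove_finite (lam : YoungDiagram) :
    {Lam : YoungDiagram | CoversBelow lam Lam}.Finite := by
  rw [coversAbove_eq]; exact Finset.finite_toSet _

lemma coversBelow_finite (lam : YoungDiagram) :
    {μ : YoungDiagram | CoversBelow μ lam}.Finite := by
  rw [coversBelow_eq]; exact Finset.finite_toSet _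

lemma coversAbove_toFinset (lam : YoungDiagram) :
    (coversAbove_finite lam).toFinset = (AddF lam).image (addCell' lam) := by
  ext Lam
  rw [Set.Finite.mem_toFinset]
  have := coversAbove_eq lam
  constructor
  · intro h; have : Lam ∈ (↑((AddF lam).image (addCell' lam)) : Set YoungDiagram) := this ▸ h
    simpa using this
  · intro h
    have h2 : Lam ∈ (↑((AddF lam).image (addCell' lam)) : Set YoungDiagram) := by simpa using h
    rw [← this] at h2; exact h2

lemma coversBelow_toFinset (lam : YoungDiagram) :
    (coversBelow_finite lam).toFinset = (RemF lam).image (removeCell' lam) := by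
  ext μ
  rw [Set.Finite.mem_toFinset]
  have := coversBelow_eq lam
  constructor
  · intro h; have : μ ∈ (↑((RemF lam).image (removeCell' lam)) : Set YoungDiagram) := this ▸ h
    simpa using this
  · intro h
    have h2 : μ ∈ (↑((RemF lam).image (removeCell' lam)) : Set YoungDiagram) := by simpa using h
    rw [← this] at h2; exact h2

lemma card_AddF_eq (lam : YoungDiagram) :
    (coversAbove_finite lam).toFinset.card = (AddF lam).card := by
  rw [coversAbove_toFinset]
  apply Finset.card_image_of_injOn
  intro i hi j hj hij
  simp only [Finset.mem_coe, AddF, Finset.mem_filter, Finset.mem_range] at hi hj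
  rw [addCell', dif_pos hi.2, addCell', dif_pos hj.2] at hij
  have hcells : insert (i, lam.rowLen i) lam.cells = insert (j, lam.rowLen j) lam.cells :=
    congrArg YoungDiagram.cells hij
  have hmem : (i, lam.rowLen i) ∈ insert (j, lam.rowLen j) lam.cells := by
    rw [← hcells]; simp
  rcases Finset.mem_insert.mp hmem with h1 | h1
  · exact congrArg Prod.fst h1
  · exfalso
    have : (i, lam.rowLen i) ∈ lam := h1
    rw [YoungDiagram.mem_iff_lt_rowLen] at this
    omega

lemma card_RemF_eq (lam : YoungDiagram) :
    (coversBelow_finite lam).toFinset.card = (RemF lam).card := by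
  rw [coversBelow_toFinset]
  apply Finset.card_image_of_injOn
  intro i hi j hj hij
  simp only [Finset.mem_coe, RemF, Finset.mem_filter, Finset.mem_range] at hi hj
  rw [removeCell', dif_pos hi.2, removeCell', dif_pos hj.2] at hij
  have hcells : lam.cells.erase (i, lam.rowLen i - 1) = lam.cells.erase (j, lam.rowLen j - 1) :=
    congrArg YoungDiagram.cells hij
  by_contra hne
  have hmem : (i, lam.rowLen i - 1) ∈ lam.cells := by
    rw [YoungDiagram.mem_cells, YoungDiagram.mem_iff_lt_rowLen]; omega
  have hmem2 : (i, lam.rowLen i - 1) ∈ lam.cells.erase (j, lam.rowLen j - 1) := by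
    apply Finset.mem_erase.mpr
    refine ⟨?_, hmem⟩
    intro hc
    exact hne (congrArg Prod.fst hc)
  rw [← hcells] at hmem2
  exact (Finset.mem_erase.mp hmem2).1 rfl

lemma AddF_card_eq_RemF_card_add_one (lam : YoungDiagram) :
    (AddF lam).card = (RemF lam).card + 1 := by
  have hset : AddF lam = insert 0 ((RemF lam).image (· + 1)) := by
    ext i
    simp only [AddF, RemF, Finset.mem_insert, Finset.mem_image, Finset.mem_filter,
      Finset.mem_range]
    constructor
    · rintro ⟨hr, h0 | hlt⟩
      · exact Or.inl h0
      · rcases Nat.eq_zero_or_pos i with rfl | hi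
        · exact Or.inl rfl
        · right
          refine ⟨i - 1, ⟨by omega, by
            have : i - 1 + 1 = i := by omega
            rw [this]; exact hlt⟩, by omega⟩
    · rintro (rfl | ⟨j, ⟨hj1, hj2⟩, rfl⟩)
      · exact ⟨by omega, Or.inl rfl⟩
      · have hj0 : 0 < lam.rowLen j := by omega
        have hjmem : (j, 0) ∈ lam := YoungDiagram.mem_iff_lt_rowLen.mpr hj0
        have hjcol : j < lam.colLen 0 := YoungDiagram.mem_iff_lt_colLen.mp hjmem
        refine ⟨by omega, Or.inr ?_⟩
        simpa using hj2
  rw [hset, Finset.card_insert_of_notMem, Finset.card_image_of_injective _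
    (fun a b h => by omega), Nat.add_comm]
  simp

lemma sup_card_add_inf_card (μ ν : YoungDiagram) :
    (μ ⊔ ν).card + (μ ⊓ ν).card = μ.card + ν.card := by
  show ((μ ⊔ ν).cells).card + ((μ ⊓ ν).cells).card = μ.cells.card + ν.cells.card
  rw [YoungDiagram.cells_sup, YoungDiagram.cells_inf]
  exact Finset.card_union_add_card_inter _ _

lemma common_above {lam μ Lam : YoungDiagram} (hne : μ ≠ lam)
    (h1 : CoversBelow lam Lam) (h2 : CoversBelow μ Lam) :
    Lam = lam ⊔ μ ∧ CoversBelow (lam ⊓ μ) lam ∧ CoversBelow (lam ⊓ μ) μ := by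
  have hcardμ : μ.card = lam.card := by
    have := h1.2; have := h2.2; omega
  have hsup_le : lam ⊔ μ ≤ Lam := sup_le h1.1 h2.1
  have hsup_card_le : (lam ⊔ μ).card ≤ Lam.card := card_le_of_le hsup_le
  have hlt : lam.card < (lam ⊔ μ).card := by
    rcases Nat.lt_or_ge lam.card (lam ⊔ μ).card with h | h
    · exact h
    · exfalso
      have heq : lam = lam ⊔ μ := eq_of_le_of_card_le le_sup_left h
      have : μ ≤ lam := by rw [heq]; exact le_sup_right
      exact hne (eq_of_le_of_card_le this (by omega))
  have hLam : Lam = lam ⊔ μ := by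
    have := h1.2
    exact (eq_of_le_of_card_le hsup_le (by omega)).symm
  have hsupcard : (lam ⊔ μ).card = lam.card + 1 := by
    have := h1.2; rw [← hLam]; omega
  have hinfcard : (lam ⊓ μ).card + 1 = lam.card := by
    have := sup_card_add_inf_card lam μ
    omega
  exact ⟨hLam, ⟨inf_le_left, hinfcard⟩, ⟨inf_le_right, by omega⟩⟩

lemma common_below {lam μ ν : YoungDiagram} (hne : μ ≠ lam)
    (h1 : CoversBelow ν lam) (h2 : CoversBelow ν μ) :
    CoversBelow lam (lam ⊔ μ) ∧ CoversBelow μ (lam ⊔ μ) ∧ ν = lam ⊓ μ := by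
  have hcardμ : μ.card = lam.card := by
    have := h1.2; have := h2.2; omega
  have hν_le : ν ≤ lam ⊓ μ := le_inf h1.1 h2.1
  have hν_card : ν.card ≤ (lam ⊓ μ).card := card_le_of_le hν_le
  have hinf_lt : (lam ⊓ μ).card < lam.card := by
    rcases Nat.lt_or_ge (lam ⊓ μ).card lam.card with h | h
    · exact h
    · exfalso
      have heq : lam ⊓ μ = lam := eq_of_le_of_card_le inf_le_left h
      have : lam ≤ μ := by rw [← heq]; exact inf_le_right
      exact hne (eq_of_le_of_card_le this (by omega)).symm
  have hinfcard : (lam ⊓ μ).card + 1 = lam.card := by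
    have := h1.2; omega
  have hν_eq : ν = lam ⊓ μ := eq_of_le_of_card_le hν_le (by have := h1.2; omega)
  have hsupcard : (lam ⊔ μ).card = lam.card + 1 := by
    have := sup_card_add_inf_card lam μ
    omega
  exact ⟨⟨le_sup_left, by omega⟩, ⟨le_sup_right, by omega⟩, hν_eq⟩

lemma main_induction (d : YoungDiagram → ℕ) (hd : CountsSYT d) :
    ∀ n (lam : YoungDiagram), lam.card = n →
      ∑ Lam ∈ (coversAbove_finite lam).toFinset, d Lam = (n + 1) * d lam := by
  intro n
  induction n using Nat.strong_induction_on with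
  | _ n IH =>
  intro lam hlam
  set U := (coversAbove_finite lam).toFinset with hU
  set L := (coversBelow_finite lam).toFinset with hL
  have hmemU : ∀ Lam, Lam ∈ U ↔ CoversBelow lam Lam := by
    intro Lam; rw [hU, Set.Finite.mem_toFinset]; rfl
  have hmemL : ∀ μ, μ ∈ L ↔ CoversBelow μ lam := by
    intro μ; rw [hL, Set.Finite.mem_toFinset]; rfl
  have hmemU' : ∀ ν Lam : YoungDiagram, Lam ∈ (coversAbove_finite ν).toFinset ↔
      CoversBelow ν Lam := by
    intro ν Lam; rw [Set.Finite.mem_toFinset]; rfl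
  have hmemL' : ∀ Lam μ : YoungDiagram, μ ∈ (coversBelow_finite Lam).toFinset ↔
      CoversBelow μ Lam := by
    intro Lam μ; rw [Set.Finite.mem_toFinset]; rfl
  -- Step A: expand d Lam for each upper cover
  have stepA : ∀ Lam ∈ U, d Lam =
      d lam + ∑ μ ∈ ((coversBelow_finite Lam).toFinset).erase lam, d μ := by
    intro Lam hLam
    rw [hmemU] at hLam
    have hbot : Lam ≠ ⊥ := by
      intro h
      have := hLam.2
      rw [h] at this
      have hb : (⊥ : YoungDiagram).card = 0 := by
        simp [YoungDiagram.card, YoungDiagram.cells_bot]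
      omega
    have h1 : d Lam = ∑ μ ∈ (coversBelow_finite Lam).toFinset, d μ := by
      rw [hd.2 Lam hbot]
      exact finsum_mem_eq_finite_toFinset_sum d (coversBelow_finite Lam)
    rw [h1, ← Finset.add_sum_erase _ d ((hmemL' Lam lam).mpr hLam)]
  have step1 : ∑ Lam ∈ U, d Lam =
      U.card * d lam + ∑ Lam ∈ U, ∑ μ ∈ ((coversBelow_finite Lam).toFinset).erase lam, d μ := by
    rw [Finset.sum_congr rfl stepA, Finset.sum_add_distrib, Finset.sum_const, smul_eq_mul]
  -- the two double sums are equal, via biUnion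
  have hdisjS : (↑U : Set YoungDiagram).PairwiseDisjoint
      (fun Lam => ((coversBelow_finite Lam).toFinset).erase lam) := by
    intro Λ₁ h₁ Λ₂ h₂ hne12
    simp only [Finset.mem_coe] at h₁ h₂
    rw [hmemU] at h₁ h₂
    rw [Function.onFun, Finset.disjoint_left]
    intro μ hμ1 hμ2
    rw [Finset.mem_erase, hmemL'] at hμ1 hμ2
    have e1 := (common_above hμ1.1 h₁ hμ1.2).1
    have e2 := (common_above hμ2.1 h₂ hμ2.2).1
    exact hne12 (e1.trans e2.symm)
  have hdisjT : (↑L : Set YoungDiagram).PairwiseDisjoint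
      (fun ν => ((coversAbove_finite ν).toFinset).erase lam) := by
    intro ν₁ h₁ ν₂ h₂ hne12
    simp only [Finset.mem_coe] at h₁ h₂
    rw [hmemL] at h₁ h₂
    rw [Function.onFun, Finset.disjoint_left]
    intro μ hμ1 hμ2
    rw [Finset.mem_erase, hmemU'] at hμ1 hμ2
    have e1 := (common_below hμ1.1 h₁ hμ1.2).2.2
    have e2 := (common_below hμ2.1 h₂ hμ2.2).2.2
    exact hne12 (e1.trans e2.symm)
  have hbiUnion : U.biUnion (fun Lam => ((coversBelow_finite Lam).toFinset).erase lam) =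
      L.biUnion (fun ν => ((coversAbove_finite ν).toFinset).erase lam) := by
    ext μ
    simp only [Finset.mem_biUnion, Finset.mem_erase]
    constructor
    · rintro ⟨Lam, hLam, hμne, hμ⟩
      rw [hmemU] at hLam
      rw [hmemL'] at hμ
      obtain ⟨-, hc1, hc2⟩ := common_above hμne hLam hμ
      exact ⟨lam ⊓ μ, (hmemL _).mpr hc1, hμne, (hmemU' _ _).mpr hc2⟩
    · rintro ⟨ν, hν, hμne, hμ⟩
      rw [hmemL] at hν
      rw [hmemU'] at hμ
      obtain ⟨hc1, hc2, -⟩ := common_below hμne hν hμ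
      exact ⟨lam ⊔ μ, (hmemU _).mpr hc1, hμne, (hmemL' _ _).mpr hc2⟩
  have step2 : ∑ Lam ∈ U, ∑ μ ∈ ((coversBelow_finite Lam).toFinset).erase lam, d μ =
      ∑ ν ∈ L, ∑ μ ∈ ((coversAbove_finite ν).toFinset).erase lam, d μ := by
    rw [← Finset.sum_biUnion hdisjS, hbiUnion, Finset.sum_biUnion hdisjT]
  -- apply the induction hypothesis for each lower cover
  have step3 : (∑ ν ∈ L, ∑ μ ∈ ((coversAbove_finite ν).toFinset).erase lam, d μ)
      + L.card * d lam = n * ∑ ν ∈ L, d ν := by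
    rw [← smul_eq_mul, ← Finset.sum_const, ← Finset.sum_add_distrib, Finset.mul_sum]
    apply Finset.sum_congr rfl
    intro ν hν
    rw [hmemL] at hν
    have hνcard : ν.card + 1 = n := by rw [← hlam]; exact hν.2
    have hIH : ∑ Lam ∈ (coversAbove_finite ν).toFinset, d Lam = n * d ν := by
      rw [IH ν.card (by omega) ν rfl, hνcard]
    rw [← hIH, ← Finset.add_sum_erase _ d ((hmemU' ν lam).mpr hν), Nat.add_comm]
  have step4 : n * ∑ ν ∈ L, d ν = n * d lam := by
    rcases Nat.eq_zero_or_pos n with rfl | hn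
    · simp
    · have hbot : lam ≠ ⊥ := by
        intro h
        have : lam.card = 0 := by rw [h]; exact card_eq_zero_iff.mpr rfl
        omega
      congr 1
      rw [hd.2 lam hbot]
      exact (finsum_mem_eq_finite_toFinset_sum d (coversBelow_finite lam)).symm
  have hUcard : U.card = L.card + 1 := by
    rw [hU, hL, card_AddF_eq, card_RemF_eq]
    exact AddF_card_eq_RemF_card_add_one lam
  have total : (∑ Lam ∈ U, d Lam) + L.card * d lam = (n + 1) * d lam + L.card * d lam := by
    rw [step1, Nat.add_assoc, step2, step3, step4, hUcard]
    ring
  exact Nat.add_right_cancel total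

end SYTAux

theorem sum_dim_covers (d : YoungDiagram → ℕ) (hd : CountsSYT d)
    (lam : YoungDiagram) :
    {Lam : YoungDiagram | CoversBelow lam Lam}.Finite ∧
      ∑ᶠ Lam ∈ {Lam : YoungDiagram | CoversBelow lam Lam}, d Lam =
        (lam.card + 1) * d lam := by
  refine ⟨SYTAux.coversAbove_finite lam, ?_⟩
  rw [finsum_mem_eq_finite_toFinset_sum d (SYTAux.coversAbove_finite lam)]
  exact SYTAux.main_induction d hd lam.card lam rfl
end

section
/- Let d : YoungDiagram → ℕ count standard Young tableaux. Then for every n : ℕ and every Young diagram λ with λ.card = n, the family of Plancherel weights is coherent under the projection forgetting the last cell: ∑ over Λ with λ ⋖ Λ of (d Λ : ℝ) / (n+1)! equals (d λ : ℝ) / n!. -/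
open Finset
open scoped Classical

namespace PlancherelAux

/-- rows where a cell can be added -/
def addSet (lam : YoungDiagram) : Finset ℕ :=
  (Finset.range (lam.colLen 0 + 1)).filter
    (fun i => i = 0 ∨ lam.rowLen i < lam.rowLen (i - 1))

/-- rows where a cell can be removed -/
def rmSet (lam : YoungDiagram) : Finset ℕ :=
  (Finset.range (lam.colLen 0)).filter
    (fun i => lam.rowLen (i + 1) < lam.rowLen i)

lemma mem_addSet {lam : YoungDiagram} {i : ℕ} :
    i ∈ addSet lam ↔ i ≤ lam.colLen 0 ∧ (i = 0 ∨ lam.rowLen i < lam.rowLen (i - 1)) := by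
  simp [addSet, Nat.lt_succ_iff]

lemma mem_rmSet {lam : YoungDiagram} {i : ℕ} :
    i ∈ rmSet lam ↔ i < lam.colLen 0 ∧ lam.rowLen (i + 1) < lam.rowLen i := by
  simp [rmSet]

lemma rowLen_pos_iff {lam : YoungDiagram} {i : ℕ} :
    0 < lam.rowLen i ↔ i < lam.colLen 0 := by
  rw [← YoungDiagram.mem_iff_lt_rowLen, ← YoungDiagram.mem_iff_lt_colLen]

lemma addSet_eq (lam : YoungDiagram) :
    addSet lam = insert 0 ((rmSet lam).image (· + 1)) := by
  ext i
  simp only [mem_addSet, mem_rmSet, Finset.mem_insert, Finset.mem_image]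
  constructor
  · rintro ⟨hle, h0 | hlt⟩
    · exact Or.inl h0
    · rcases Nat.eq_zero_or_pos i with rfl | hpos
      · exact Or.inl rfl
      · refine Or.inr ⟨i - 1, ⟨?_, ?_⟩, by omega⟩
        · rw [← rowLen_pos_iff]; omega
        · have : i - 1 + 1 = i := by omega
          rw [this]; exact hlt
  · rintro (rfl | ⟨k, ⟨hk1, hk2⟩, rfl⟩)
    · exact ⟨Nat.zero_le _, Or.inl rfl⟩
    · refine ⟨by omega, Or.inr ?_⟩
      simpa using hk2

lemma card_addSet (lam : YoungDiagram) :
    (addSet lam).card = (rmSet lam).card + 1 := by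
  rw [addSet_eq, Finset.card_insert_of_notMem (by simp), Finset.card_image_of_injective _
    (fun a b h => by omega)]


lemma lowerSet_insert (lam : YoungDiagram) (i : ℕ)
    (h : i = 0 ∨ lam.rowLen i < lam.rowLen (i - 1)) :
    IsLowerSet (↑(insert (i, lam.rowLen i) lam.cells) : Set (ℕ × ℕ)) := by
  intro a b hba ha
  simp only [Finset.coe_insert, Set.mem_insert_iff, Finset.mem_coe, YoungDiagram.mem_cells] at *
  rcases ha with ha | ha
  · subst ha
    obtain ⟨h1, h2⟩ := hba
    simp only at h1 h2
    rcases eq_or_lt_of_le h2 with h2 | h2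
    · -- b.2 = rowLen i
      rcases eq_or_lt_of_le h1 with h1 | h1
      · left; exact Prod.ext h1 h2
      · right
        have hb : b = (b.1, b.2) := rfl
        rw [hb, YoungDiagram.mem_iff_lt_rowLen, h2]
        rcases h with rfl | h
        · omega
        · calc lam.rowLen i < lam.rowLen (i-1) := h
            _ ≤ lam.rowLen b.1 := lam.rowLen_anti _ _ (by omega)
    · right
      have hb : b = (b.1, b.2) := rfl
      rw [hb, YoungDiagram.mem_iff_lt_rowLen]
      calc b.2 < lam.rowLen i := h2
        _ ≤ lam.rowLen b.1 := lam.rowLen_anti _ _ h1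
  · exact Or.inr (lam.isLowerSet hba ha)

lemma lowerSet_erase (lam : YoungDiagram) (i : ℕ)
    (h : lam.rowLen (i + 1) < lam.rowLen i) :
    IsLowerSet (↑(lam.cells.erase (i, lam.rowLen i - 1)) : Set (ℕ × ℕ)) := by
  intro a b hba ha
  simp only [Finset.coe_erase, Set.mem_diff, Finset.mem_coe, YoungDiagram.mem_cells,
    Set.mem_singleton_iff] at *
  obtain ⟨ha, hane⟩ := ha
  refine ⟨lam.isLowerSet hba ha, ?_⟩
  rintro rfl
  obtain ⟨h1, h2⟩ := hba
  simp only at h1 h2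
  have ha2 : a.2 < lam.rowLen a.1 := by
    have : a = (a.1, a.2) := rfl
    rwa [this, YoungDiagram.mem_iff_lt_rowLen] at ha
  have hle : lam.rowLen a.1 ≤ lam.rowLen i := lam.rowLen_anti _ _ h1
  have hi : a.1 = i := by
    by_contra hne
    have : lam.rowLen a.1 ≤ lam.rowLen (i + 1) := lam.rowLen_anti _ _ (by omega)
    omega
  have : a.2 = lam.rowLen i - 1 := by omega
  exact hane (Prod.ext hi this)

/-- diagram with a cell added in row `i` (junk value `lam` if not addable) -/
def addCell (lam : YoungDiagram) (i : ℕ) : YoungDiagram :=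
  if h : i = 0 ∨ lam.rowLen i < lam.rowLen (i - 1) then
    ⟨insert (i, lam.rowLen i) lam.cells, lowerSet_insert lam i h⟩
  else lam

/-- diagram with the last cell of row `i` removed (junk value `lam` if not removable) -/
def rmCell (lam : YoungDiagram) (i : ℕ) : YoungDiagram :=
  if h : lam.rowLen (i + 1) < lam.rowLen i then
    ⟨lam.cells.erase (i, lam.rowLen i - 1), lowerSet_erase lam i h⟩
  else lam

lemma addCell_cells {lam : YoungDiagram} {i : ℕ}
    (h : i = 0 ∨ lam.rowLen i < lam.rowLen (i - 1)) :
    (addCell lam i).cells = insert (i, lam.rowLen i) lam.cells := by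
  rw [addCell, dif_pos h]

lemma rmCell_cells {lam : YoungDiagram} {i : ℕ}
    (h : lam.rowLen (i + 1) < lam.rowLen i) :
    (rmCell lam i).cells = lam.cells.erase (i, lam.rowLen i - 1) := by
  rw [rmCell, dif_pos h]

end PlancherelAux

namespace PlancherelAux







/-- A cover is obtained by inserting a single cell. -/
lemma covers_exists {μ lam : YoungDiagram} (h : CoversBelow μ lam) :
    ∃ c, c ∉ μ.cells ∧ lam.cells = insert c μ.cells := by
  obtain ⟨hle, hcard⟩ := h
  have hsub : μ.cells ⊆ lam.cells := hle
  have hcard' : μ.cells.card + 1 = lam.cells.card := hcard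
  have h1 : (lam.cells \ μ.cells).card = 1 := by
    rw [Finset.card_sdiff_of_subset hsub]; omega
  obtain ⟨c, hc⟩ := Finset.card_eq_one.mp h1
  refine ⟨c, ?_, ?_⟩
  · have : c ∈ lam.cells \ μ.cells := by rw [hc]; exact Finset.mem_singleton_self c
    exact (Finset.mem_sdiff.mp this).2
  · have := Finset.union_sdiff_of_subset hsub
    rw [hc] at this
    rw [← this, Finset.union_comm, ← Finset.insert_eq]

lemma coversBelow_addCell {lam : YoungDiagram} {i : ℕ} (h : i ∈ addSet lam) :
    CoversBelow lam (addCell lam i) := by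
  rw [mem_addSet] at h
  have hc := addCell_cells (lam := lam) (i := i) h.2
  have hnot : (i, lam.rowLen i) ∉ lam.cells := by
    rw [YoungDiagram.mem_cells, YoungDiagram.mem_iff_lt_rowLen]; omega
  constructor
  · intro x hx
    rw [← YoungDiagram.mem_cells, hc]
    exact Finset.mem_insert_of_mem hx
  · rw [YoungDiagram.card, YoungDiagram.card, hc, Finset.card_insert_of_notMem hnot]

lemma coversBelow_rmCell {lam : YoungDiagram} {i : ℕ} (h : i ∈ rmSet lam) :
    CoversBelow (rmCell lam i) lam := by
  rw [mem_rmSet] at h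
  have hc := rmCell_cells (lam := lam) (i := i) h.2
  have hmem : (i, lam.rowLen i - 1) ∈ lam.cells := by
    rw [YoungDiagram.mem_cells, YoungDiagram.mem_iff_lt_rowLen]; omega
  constructor
  · intro x hx
    rw [← YoungDiagram.mem_cells, hc] at hx
    exact Finset.mem_of_mem_erase hx
  · rw [YoungDiagram.card, YoungDiagram.card, hc, Finset.card_erase_of_mem hmem]
    have : 0 < lam.cells.card := Finset.card_pos.mpr ⟨_, hmem⟩
    omega

/-- every upper cover comes from `addSet` -/
lemma covers_above_char {lam Lam : YoungDiagram} (h : CoversBelow lam Lam) :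
    ∃ i ∈ addSet lam, Lam = addCell lam i := by
  obtain ⟨c, hcn, hcells⟩ := covers_exists h
  obtain ⟨i, j⟩ := c
  have hmemLam : (i, j) ∈ Lam.cells := by rw [hcells]; exact Finset.mem_insert_self _ _
  have hge : lam.rowLen i ≤ j := by
    by_contra hlt
    exact hcn (by rw [YoungDiagram.mem_cells, YoungDiagram.mem_iff_lt_rowLen]; omega)
  have hj : j = lam.rowLen i := by
    by_contra hne
    have hj1 : 1 ≤ j := by omega
    have : (i, j - 1) ∈ Lam := Lam.up_left_mem le_rfl (by omega) hmemLam
    rw [← YoungDiagram.mem_cells, hcells] at this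
    rcases Finset.mem_insert.mp this with heq | hmem
    · have := (Prod.ext_iff.mp heq).2; simp at this; omega
    · rw [YoungDiagram.mem_cells, YoungDiagram.mem_iff_lt_rowLen] at hmem; omega
  subst hj
  have hadd : i = 0 ∨ lam.rowLen i < lam.rowLen (i - 1) := by
    rcases Nat.eq_zero_or_pos i with h0 | hpos
    · exact Or.inl h0
    · right
      have : (i - 1, lam.rowLen i) ∈ Lam := Lam.up_left_mem (by omega) le_rfl hmemLam
      rw [← YoungDiagram.mem_cells, hcells] at this
      rcases Finset.mem_insert.mp this with heq | hmem
      · have := (Prod.ext_iff.mp heq).1; simp at this; omega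
      · rw [YoungDiagram.mem_cells, YoungDiagram.mem_iff_lt_rowLen] at hmem
        have hmono := lam.rowLen_anti (i-1) i (by omega)
        omega
  have hrange : i ≤ lam.colLen 0 := by
    rcases Nat.eq_zero_or_pos i with h0 | hpos
    · omega
    · rcases hadd with h0 | hlt
      · omega
      · have : 0 < lam.rowLen (i - 1) := by omega
        rw [rowLen_pos_iff] at this
        omega
  refine ⟨i, mem_addSet.mpr ⟨hrange, hadd⟩, ?_⟩
  ext x
  rw [hcells, addCell_cells hadd]

/-- every lower cover comes from `rmSet` -/
lemma covers_below_char {μ lam : YoungDiagram} (h : CoversBelow μ lam) :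
    ∃ i ∈ rmSet lam, μ = rmCell lam i := by
  obtain ⟨c, hcn, hcells⟩ := covers_exists h
  obtain ⟨i, j⟩ := c
  have hmemLam : (i, j) ∈ lam.cells := by rw [hcells]; exact Finset.mem_insert_self _ _
  have hjlt : j < lam.rowLen i := by
    rwa [YoungDiagram.mem_cells, YoungDiagram.mem_iff_lt_rowLen] at hmemLam
  have hnotright : (i, j + 1) ∉ lam.cells := by
    intro hmem
    rw [hcells] at hmem
    rcases Finset.mem_insert.mp hmem with heq | hmem
    · have := (Prod.ext_iff.mp heq).2; simp at this
    · exact hcn (μ.up_left_mem le_rfl (by omega) hmem)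
  have hnotdown : (i + 1, j) ∉ lam.cells := by
    intro hmem
    rw [hcells] at hmem
    rcases Finset.mem_insert.mp hmem with heq | hmem
    · have := (Prod.ext_iff.mp heq).1; simp at this
    · exact hcn (μ.up_left_mem (by omega) le_rfl hmem)
  have hj : j = lam.rowLen i - 1 := by
    rw [YoungDiagram.mem_cells, YoungDiagram.mem_iff_lt_rowLen] at hnotright
    omega
  have hrm : lam.rowLen (i + 1) < lam.rowLen i := by
    rw [YoungDiagram.mem_cells, YoungDiagram.mem_iff_lt_rowLen] at hnotdown
    omega
  have hrange : i < lam.colLen 0 := by rw [← rowLen_pos_iff]; omega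
  refine ⟨i, mem_rmSet.mpr ⟨hrange, hrm⟩, ?_⟩
  ext x
  rw [rmCell_cells hrm]
  subst hj
  rw [hcells, Finset.erase_insert (by simpa using hcn)]


noncomputable def upF (lam : YoungDiagram) : Finset YoungDiagram :=
  (addSet lam).image (addCell lam)

noncomputable def downF (lam : YoungDiagram) : Finset YoungDiagram :=
  (rmSet lam).image (rmCell lam)

lemma mem_upF {lam Lam : YoungDiagram} : Lam ∈ upF lam ↔ CoversBelow lam Lam := by
  constructor
  · intro h
    obtain ⟨i, hi, rfl⟩ := Finset.mem_image.mp h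
    exact coversBelow_addCell hi
  · intro h
    obtain ⟨i, hi, rfl⟩ := covers_above_char h
    exact Finset.mem_image.mpr ⟨i, hi, rfl⟩

lemma mem_downF {μ lam : YoungDiagram} : μ ∈ downF lam ↔ CoversBelow μ lam := by
  constructor
  · intro h
    obtain ⟨i, hi, rfl⟩ := Finset.mem_image.mp h
    exact coversBelow_rmCell hi
  · intro h
    obtain ⟨i, hi, rfl⟩ := covers_below_char h
    exact Finset.mem_image.mpr ⟨i, hi, rfl⟩

lemma addCell_injOn (lam : YoungDiagram) :
    Set.InjOn (addCell lam) (addSet lam) := by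
  intro i hi j hj hij
  simp only [Finset.mem_coe, mem_addSet] at hi hj
  have hci := addCell_cells (lam := lam) hi.2
  have hcj := addCell_cells (lam := lam) hj.2
  have hnoti : (i, lam.rowLen i) ∉ lam.cells := by
    rw [YoungDiagram.mem_cells, YoungDiagram.mem_iff_lt_rowLen]; omega
  have : (i, lam.rowLen i) ∈ (addCell lam j).cells := by
    rw [← hij, hci]; exact Finset.mem_insert_self _ _
  rw [hcj] at this
  rcases Finset.mem_insert.mp this with heq | hmem
  · exact (Prod.ext_iff.mp heq).1
  · exact absurd hmem hnoti

lemma rmCell_injOn (lam : YoungDiagram) :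
    Set.InjOn (rmCell lam) (rmSet lam) := by
  intro i hi j hj hij
  simp only [Finset.mem_coe, mem_rmSet] at hi hj
  have hci := rmCell_cells (lam := lam) hi.2
  have hcj := rmCell_cells (lam := lam) hj.2
  by_contra hne
  have hmem : (i, lam.rowLen i - 1) ∈ lam.cells := by
    rw [YoungDiagram.mem_cells, YoungDiagram.mem_iff_lt_rowLen]; omega
  have h1 : (i, lam.rowLen i - 1) ∉ (rmCell lam i).cells := by
    rw [hci]; exact Finset.notMem_erase _ _
  have h2 : (i, lam.rowLen i - 1) ∈ (rmCell lam j).cells := by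
    rw [hcj]
    exact Finset.mem_erase.mpr ⟨by simp [Prod.ext_iff]; omega, hmem⟩
  rw [hij] at h1
  exact h1 h2

lemma card_upF (lam : YoungDiagram) : (upF lam).card = (downF lam).card + 1 := by
  rw [upF, downF, Finset.card_image_of_injOn (addCell_injOn lam),
    Finset.card_image_of_injOn (rmCell_injOn lam), card_addSet]

/-- common lower covers from a common upper cover -/
lemma inf_covers {lam μ Lam : YoungDiagram} (hl : CoversBelow lam Lam)
    (hm : CoversBelow μ Lam) (hne : μ ≠ lam) :
    CoversBelow (lam ⊓ μ) lam ∧ CoversBelow (lam ⊓ μ) μ ∧ lam ⊔ μ = Lam := by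
  have el : lam.card = lam.cells.card := rfl
  have em : μ.card = μ.cells.card := rfl
  have eL : Lam.card = Lam.cells.card := rfl
  have hl2 := hl.2
  have hm2 := hm.2
  have hcard : lam.card = μ.card := by omega
  have hsubl : lam.cells ⊆ Lam.cells := hl.1
  have hsubm : μ.cells ⊆ Lam.cells := hm.1
  have hunion_sub : lam.cells ∪ μ.cells ⊆ Lam.cells := Finset.union_subset hsubl hsubm
  have hssub : lam.cells ⊂ lam.cells ∪ μ.cells := by
    refine Finset.ssubset_iff_subset_ne.mpr ⟨Finset.subset_union_left, ?_⟩
    intro heq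
    apply hne
    ext x
    constructor
    · intro hx
      exact (Finset.eq_of_subset_of_card_le (fun y hy => heq ▸ Finset.mem_union_right _ hy)
        (by omega) ▸ hx : _)
    · intro hx
      have : μ.cells ⊆ lam.cells := fun y hy => heq ▸ Finset.mem_union_right _ hy
      have := Finset.eq_of_subset_of_card_le this (by omega)
      rw [← this] at hx
      exact hx
  have h1 : lam.card + 1 ≤ (lam.cells ∪ μ.cells).card := Finset.card_lt_card hssub
  have h2 : (lam.cells ∪ μ.cells).card ≤ Lam.card := Finset.card_le_card hunion_sub
  have h3 : (lam.cells ∪ μ.cells).card + (lam.cells ∩ μ.cells).card = lam.card + μ.card :=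
    Finset.card_union_add_card_inter _ _
  have hucard : (lam.cells ∪ μ.cells).card = Lam.card := by omega
  have hsup : lam ⊔ μ = Lam := by
    apply YoungDiagram.ext
    rw [YoungDiagram.cells_sup]
    exact Finset.eq_of_subset_of_card_le hunion_sub (by omega)
  refine ⟨⟨inf_le_left, ?_⟩, ⟨inf_le_right, ?_⟩, hsup⟩
  · show (lam ⊓ μ).cells.card + 1 = lam.card
    rw [YoungDiagram.cells_inf]
    omega
  · show (lam ⊓ μ).cells.card + 1 = μ.card
    rw [YoungDiagram.cells_inf]
    omega

/-- common upper covers from a common lower cover -/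
lemma sup_covers {lam μ ν : YoungDiagram} (hl : CoversBelow ν lam)
    (hm : CoversBelow ν μ) (hne : μ ≠ lam) :
    CoversBelow lam (lam ⊔ μ) ∧ CoversBelow μ (lam ⊔ μ) ∧ lam ⊓ μ = ν := by
  have el : lam.card = lam.cells.card := rfl
  have em : μ.card = μ.cells.card := rfl
  have en : ν.card = ν.cells.card := rfl
  have hl2 := hl.2
  have hm2 := hm.2
  have hcard : lam.card = μ.card := by omega
  have hsubl : ν.cells ⊆ lam.cells := hl.1
  have hsubm : ν.cells ⊆ μ.cells := hm.1
  have hsub_inter : ν.cells ⊆ lam.cells ∩ μ.cells := Finset.subset_inter hsubl hsubm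
  have hssub : lam.cells ∩ μ.cells ⊂ lam.cells := by
    refine Finset.ssubset_iff_subset_ne.mpr ⟨Finset.inter_subset_left, ?_⟩
    intro heq
    apply hne
    have hlm : lam.cells ⊆ μ.cells := by
      intro x hx
      rw [← heq] at hx
      exact (Finset.mem_inter.mp hx).2
    have h4 := Finset.eq_of_subset_of_card_le hlm (by omega)
    exact (YoungDiagram.ext h4).symm
  have h1 : (lam.cells ∩ μ.cells).card < lam.card := Finset.card_lt_card hssub
  have h2 : ν.card ≤ (lam.cells ∩ μ.cells).card := Finset.card_le_card hsub_inter
  have h3 : (lam.cells ∪ μ.cells).card + (lam.cells ∩ μ.cells).card = lam.card + μ.card :=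
    Finset.card_union_add_card_inter _ _
  have hicard : (lam.cells ∩ μ.cells).card = ν.card := by omega
  have hinf : lam ⊓ μ = ν := by
    apply YoungDiagram.ext
    rw [YoungDiagram.cells_inf]
    exact (Finset.eq_of_subset_of_card_le hsub_inter (by omega)).symm
  refine ⟨⟨le_sup_left, ?_⟩, ⟨le_sup_right, ?_⟩, hinf⟩
  · show lam.card + 1 = (lam ⊔ μ).cells.card
    rw [YoungDiagram.cells_sup]
    omega
  · show μ.card + 1 = (lam ⊔ μ).cells.card
    rw [YoungDiagram.cells_sup]
    omega


lemma coversBelow_not_bot {lam Lam : YoungDiagram} (h : CoversBelow lam Lam) : Lam ≠ ⊥ := by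
  intro hh
  subst hh
  have := h.2
  simp [YoungDiagram.card] at this

lemma rec_sum {d : YoungDiagram → ℕ} (hd : CountsSYT d) {lam : YoungDiagram} (h : lam ≠ ⊥) :
    d lam = ∑ μ ∈ downF lam, d μ := by
  have h2 := hd.2 lam h
  have hset : {μ : YoungDiagram | CoversBelow μ lam} = ↑(downF lam) :=
    Set.ext fun μ => by simp [mem_downF]
  rwa [hset, finsum_mem_coe_finset] at h2

lemma key (d : YoungDiagram → ℕ) (hd : CountsSYT d) :
    ∀ n : ℕ, ∀ lam : YoungDiagram, lam.card = n →
      ∑ Λ ∈ upF lam, d Λ = (n + 1) * d lam := by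
  intro n
  induction n using Nat.strong_induction_on with
  | _ n IH =>
    intro lam hcard
    -- Step 1: expand each upper cover using the recursion
    have step1 : ∀ Λ ∈ upF lam, d Λ = d lam + ∑ μ ∈ (downF Λ).erase lam, d μ := by
      intro Λ hΛ
      have hc : CoversBelow lam Λ := mem_upF.mp hΛ
      have hne : Λ ≠ ⊥ := coversBelow_not_bot hc
      have hmem : lam ∈ downF Λ := mem_downF.mpr hc
      rw [rec_sum hd hne, ← Finset.add_sum_erase _ _ hmem]
    have hS : ∑ Λ ∈ upF lam, d Λ
        = (upF lam).card * d lam + ∑ Λ ∈ upF lam, ∑ μ ∈ (downF Λ).erase lam, d μ := by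
      rw [Finset.sum_congr rfl step1, Finset.sum_add_distrib, Finset.sum_const, smul_eq_mul]
    -- Step 2: the double sums agree (the Young lattice "commutation" relation)
    have hdisj1 : (↑(upF lam) : Set YoungDiagram).PairwiseDisjoint
        (fun Λ => (downF Λ).erase lam) := by
      intro Λ1 h1 Λ2 h2 hne
      simp only [Function.onFun, Finset.disjoint_left]
      intro μ hμ1 hμ2
      rw [Finset.mem_erase] at hμ1 hμ2
      have c1 := inf_covers (mem_upF.mp (Finset.mem_coe.mp h1)) (mem_downF.mp hμ1.2) hμ1.1
      have c2 := inf_covers (mem_upF.mp (Finset.mem_coe.mp h2)) (mem_downF.mp hμ2.2) hμ2.1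
      exact hne (c1.2.2.symm.trans c2.2.2)
    have hdisj2 : (↑(downF lam) : Set YoungDiagram).PairwiseDisjoint
        (fun ν => (upF ν).erase lam) := by
      intro ν1 h1 ν2 h2 hne
      simp only [Function.onFun, Finset.disjoint_left]
      intro μ hμ1 hμ2
      rw [Finset.mem_erase] at hμ1 hμ2
      have c1 := sup_covers (mem_downF.mp (Finset.mem_coe.mp h1)) (mem_upF.mp hμ1.2) hμ1.1
      have c2 := sup_covers (mem_downF.mp (Finset.mem_coe.mp h2)) (mem_upF.mp hμ2.2) hμ2.1
      exact hne (c1.2.2.symm.trans c2.2.2)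
    have hB : (upF lam).biUnion (fun Λ => (downF Λ).erase lam)
        = (downF lam).biUnion (fun ν => (upF ν).erase lam) := by
      ext μ
      simp only [Finset.mem_biUnion, Finset.mem_erase]
      constructor
      · rintro ⟨Λ, hΛ, hμne, hμΛ⟩
        have c := inf_covers (mem_upF.mp hΛ) (mem_downF.mp hμΛ) hμne
        exact ⟨lam ⊓ μ, mem_downF.mpr c.1, hμne, mem_upF.mpr c.2.1⟩
      · rintro ⟨ν, hν, hμne, hμν⟩
        have c := sup_covers (mem_downF.mp hν) (mem_upF.mp hμν) hμne
        exact ⟨lam ⊔ μ, mem_upF.mpr c.1, hμne, mem_downF.mpr c.2.1⟩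
    have hUT : (∑ Λ ∈ upF lam, ∑ μ ∈ (downF Λ).erase lam, d μ)
        = ∑ ν ∈ downF lam, ∑ μ ∈ (upF ν).erase lam, d μ := by
      rw [← Finset.sum_biUnion hdisj1, ← Finset.sum_biUnion hdisj2, hB]
    -- Step 3: evaluate the second double sum using the induction hypothesis
    have step3 : ∀ ν ∈ downF lam, (∑ μ ∈ (upF ν).erase lam, d μ) + d lam = n * d ν := by
      intro ν hν
      have hc : CoversBelow ν lam := mem_downF.mp hν
      have hn : ν.card + 1 = n := by rw [hc.2, hcard]
      have hIH := IH ν.card (by omega) ν rfl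
      have hmem : lam ∈ upF ν := mem_upF.mpr hc
      rw [← Finset.sum_erase_add _ _ hmem] at hIH
      rw [hIH]
      have : ν.card + 1 = n := hn
      rw [this]
    have hT : (∑ ν ∈ downF lam, ∑ μ ∈ (upF ν).erase lam, d μ) + (downF lam).card * d lam
        = n * d lam := by
      rcases eq_or_ne lam ⊥ with rfl | hbot
      · have hdown : downF (⊥ : YoungDiagram) = ∅ := by
          ext μ
          simp only [mem_downF, Finset.notMem_empty, iff_false]
          intro hc
          exact coversBelow_not_bot hc rfl
        have hn0 : n = 0 := by rw [← hcard]; rfl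
        rw [hdown, hn0]
        simp
      · have h6 : ∑ ν ∈ downF lam, ((∑ μ ∈ (upF ν).erase lam, d μ) + d lam)
            = ∑ ν ∈ downF lam, n * d ν := Finset.sum_congr rfl step3
        rw [Finset.sum_add_distrib, Finset.sum_const, smul_eq_mul, ← Finset.mul_sum,
          ← rec_sum hd hbot] at h6
        exact h6
    -- Assemble
    have hr := card_upF lam
    apply Nat.add_right_cancel (m := (downF lam).card * d lam)
    rw [hS, hUT, hr]
    calc ((downF lam).card + 1) * d lam
          + (∑ ν ∈ downF lam, ∑ μ ∈ (upF ν).erase lam, d μ)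
          + (downF lam).card * d lam
        = ((downF lam).card + 1) * d lam
          + ((∑ ν ∈ downF lam, ∑ μ ∈ (upF ν).erase lam, d μ)
            + (downF lam).card * d lam) := by ring
      _ = ((downF lam).card + 1) * d lam + n * d lam := by rw [hT]
      _ = (n + 1) * d lam + (downF lam).card * d lam := by ring

end PlancherelAux

open PlancherelAux in
theorem plancherel_coherent (d : YoungDiagram → ℕ) (hd : CountsSYT d)
    (n : ℕ) (lam : YoungDiagram) (hcard : lam.card = n) :
    ∑ᶠ Lam ∈ {Lam : YoungDiagram | CoversBelow lam Lam},
        (d Lam : ℝ) / (n + 1).factorial = (d lam : ℝ) / n.factorial := by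
  have hkey := key d hd n lam hcard
  have hset : {Lam : YoungDiagram | CoversBelow lam Lam} = ↑(upF lam) :=
    Set.ext fun Λ => by simp [mem_upF]
  rw [hset, finsum_mem_coe_finset, ← Finset.sum_div, ← Nat.cast_sum, hkey,
    Nat.factorial_succ]
  have h1 : (n.factorial : ℝ) ≠ 0 := Nat.cast_ne_zero.mpr n.factorial_ne_zero
  have h2 : (n : ℝ) + 1 ≠ 0 := by positivity
  push_cast
  field_simp
end
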